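/- Let C^k_a denote the alternating 2-chain of length k whose least element has label a ∈ {0,1}: its underlying set is {0,1,…,k} with the natural order and labeling c(i) = a + i mod 2. Then there exists a label- and order-preserving map (homomorphism) from C^k_a to C^ℓ_b if and only if k < ℓ or (k, a) = (ℓ, b). -/

import Mathlib

/-- Homomorphisms of alternating 2-chains: `C^k_a` is the chain `0 < 1 < ⋯ < k`
with label `c(i) = a + i` in `ZMod 2`.  A homomorphism `C^k_a → C^ℓ_b` (monotone
label-preserving map) exists iff `k < ℓ` or `(k, a) = (ℓ, b)`. -/
theorem stmt7 (k l : ℕ) (a b : ZMod 2) :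
    (∃ h : Fin (k + 1) → Fin (l + 1), Monotone h ∧
      ∀ i : Fin (k + 1), b + ((h i : ℕ) : ZMod 2) = a + ((i : ℕ) : ZMod 2)) ↔
    (k < l ∨ (k = l ∧ a = b)) := by
  constructor
  · rintro ⟨h, hmono, hlab⟩
    -- h is strictly monotone
    have hsm : StrictMono h := by
      rw [Fin.strictMono_iff_lt_succ]
      intro i
      have hle : h i.castSucc ≤ h i.succ := hmono (le_of_lt (Fin.castSucc_lt_succ (i := i)))
      rcases lt_or_eq_of_le hle with hlt | heq
      · exact hlt
      · exfalso
        have e1 := hlab i.castSucc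
        have e2 := hlab i.succ
        rw [heq] at e1
        have : ((i.castSucc : ℕ) : ZMod 2) = ((i.succ : ℕ) : ZMod 2) := by
          have := e1.symm.trans e2
          exact add_left_cancel this
        simp only [Fin.coe_castSucc, Fin.val_succ] at this
        push_cast at this
        have : (0 : ZMod 2) = 1 := by linear_combination this
        exact zero_ne_one this
    have hkl : k ≤ l := by
      have := Fintype.card_le_of_injective h hsm.injective
      simpa using this
    rcases lt_or_eq_of_le hkl with hlt | heq
    · exact Or.inl hlt
    · right
      refine ⟨heq, ?_⟩
      -- show h 0 has value 0
      have key : ∀ m (hm : m ≤ k), ((h 0 : Fin (l+1)) : ℕ) + m ≤ ((h ⟨m, by omega⟩ : Fin (l+1)) : ℕ) := by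
        intro m
        induction m with
        | zero => intro _; simp
        | succ n ih =>
          intro hm
          have h1 := ih (by omega)
          have h2 : h ⟨n, by omega⟩ < h ⟨n+1, by omega⟩ := hsm (by simp [Fin.lt_def])
          have := Fin.lt_def.mp h2
          omega
      have hk := key k le_rfl
      have hb : ((h ⟨k, by omega⟩ : Fin (l+1)) : ℕ) ≤ l := by omega
      have h0 : ((h 0 : Fin (l+1)) : ℕ) = 0 := by omega
      have := hlab 0
      rw [h0] at this
      simpa using this.symm
  · rintro (hlt | ⟨heq, hab⟩)
    · -- k < l
      set t : ℕ := if a = b then 0 else 1 with ht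
      refine ⟨fun i => ⟨i.val + t, by
        have : i.val ≤ k := by omega
        have : t ≤ 1 := by split_ifs at ht <;> omega
        omega⟩, ?_, ?_⟩
      · intro i j hij
        simp only [Fin.le_def]
        have := Fin.le_def.mp hij
        omega
      · intro i
        simp only
        push_cast
        have : b + (t : ZMod 2) = a := by
          by_cases hab : a = b
          · simp [ht, hab]
          · have h1 : (t : ℕ) = 1 := by simp [ht, hab]
            rw [h1]
            revert hab
            revert a b
            decide
        linear_combination this
    · -- k = l, a = b
      subst heq hab
      exact ⟨id, monotone_id, fun i => rfl⟩
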